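/- Let G be a connected multigraph, let u, v, w be the three vertices of the delta (respectively the external vertices of the wye) on which a Δ-YY transformation (respectively a YY-Δ transformation) is performed to produce G', and let i be the number of non-empty connections among the pairs uv, uw, vw remaining after deleting the edges of that delta (respectively wye). Then the cyclomatic number c' of the simplification G'^S satisfies c' = c − (1 − i) in the case of a Δ-YY transformation, and c' = c + (1 − i) in the case of a YY-Δ transformation, where c is the cyclomatic number of the simplification G^S. -/

import Mathlib

open scoped Classical

noncomputable section

/-- A multigraph: a finite vertex type together with a symmetric multiplicity
function recording the size of the connection (set of parallel edges) between
any two vertices; there are no loops. -/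
structure MG : Type 1 where
  V : Type
  fin : Fintype V
  mult : V → V → ℕ
  symm : ∀ u v, mult u v = mult v u
  loopless : ∀ v, mult v v = 0

namespace MG

/-- Two vertices are adjacent when their connection is non-empty. -/
def Adj (G : MG) (u v : G.V) : Prop := 0 < G.mult u v

/-- Connection size as a function on unordered pairs of vertices. -/
def multS (G : MG) : Sym2 G.V → ℕ := Sym2.lift ⟨G.mult, G.symm⟩

/-- Number of vertices. -/
def order (G : MG) : ℕ := @Fintype.card G.V G.fin

/-- Degree of a vertex, counting edges with multiplicity. -/
def deg (G : MG) (v : G.V) : ℕ :=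
  haveI := G.fin
  ∑ u, G.mult v u

/-- `G` is `k`-regular. -/
def Regular (G : MG) (k : ℕ) : Prop := ∀ v, G.deg v = k

/-- A simple graph: every connection has size at most 1. -/
def Simple (G : MG) : Prop := ∀ u v, G.mult u v ≤ 1

/-- Isomorphism of multigraphs. -/
def Iso (G H : MG) : Prop :=
  ∃ e : G.V ≃ H.V, ∀ u v, H.mult (e u) (e v) = G.mult u v

/-- Indicator: is `{a,b}` one of the three pairs `{u,v}, {u,w}, {v,w}`? -/
def triCount {V : Type} (u v w a b : V) : ℕ :=
  if s(a, b) ∈ ({s(u, v), s(u, w), s(v, w)} : Set (Sym2 V)) then 1 else 0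

lemma triCount_symm {V : Type} (u v w a b : V) :
    triCount u v w a b = triCount u v w b a := by
  unfold triCount
  have h : s(a, b) = s(b, a) := Sym2.eq_swap
  rw [h]

/-- `u, v, w` form a delta (triangle): pairwise distinct and pairwise adjacent. -/
def IsDelta (G : MG) (u v w : G.V) : Prop :=
  u ≠ v ∧ u ≠ w ∧ v ≠ w ∧ G.Adj u v ∧ G.Adj u w ∧ G.Adj v w

/-- `x` is the centre of a wye with external vertices `u, v, w`: the edges
incident to `x` are exactly two parallel edges to each of `u, v, w`. -/
def IsWye (G : MG) (x u v w : G.V) : Prop :=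
  u ≠ v ∧ u ≠ w ∧ v ≠ w ∧ x ≠ u ∧ x ≠ v ∧ x ≠ w ∧
    G.mult x u = 2 ∧ G.mult x v = 2 ∧ G.mult x w = 2 ∧
    ∀ y : G.V, y ≠ u → y ≠ v → y ≠ w → G.mult x y = 0

/-- Multiplicity function of the result of a Δ-YY transformation on the
delta `u, v, w`; the new vertex `x` is `none`. -/
def deltaMult (G : MG) (u v w : G.V) : Option G.V → Option G.V → ℕ
  | none, none => 0
  | none, some b => if b = u ∨ b = v ∨ b = w then 2 else 0
  | some a, none => if a = u ∨ a = v ∨ a = w then 2 else 0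
  | some a, some b => G.mult a b - triCount u v w a b

/-- The result of the Δ-YY transformation on the delta `u, v, w`: one edge of
each of the connections `uv`, `uw`, `vw` is removed, a new vertex (`none`) is
added, joined by two parallel edges to each of `u, v, w`. -/
def deltaYY (G : MG) (u v w : G.V) : MG where
  V := Option G.V
  fin := by haveI := G.fin; infer_instance
  mult := G.deltaMult u v w
  symm := by
    rintro (_ | a) (_ | b)
    · rfl
    · rfl
    · rfl
    · show G.mult a b - triCount u v w a b = G.mult b a - triCount u v w b a
      rw [G.symm a b, triCount_symm]
  loopless := by
    rintro (_ | a)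
    · rfl
    · show G.mult a a - triCount u v w a a = 0
      rw [G.loopless]
      exact Nat.zero_sub _

/-- The result of the YY-Δ transformation on a wye with centre `x` and external
vertices `u, v, w`: the vertex `x` is deleted together with all its incident
edges, and one new edge is added to each of the connections `uv`, `uw`, `vw`. -/
def yyDelta (G : MG) (x u v w : G.V) : MG where
  V := {y : G.V // y ≠ x}
  fin := by haveI := G.fin; infer_instance
  mult a b := if a = b then 0 else G.mult a.1 b.1 + triCount u v w a.1 b.1
  symm := by
    intro a b
    try dsimp only
    rcases eq_or_ne a b with h | h
    · subst h; rfl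
    · rw [if_neg h, if_neg h.symm, G.symm a.1 b.1, triCount_symm]
  loopless := fun a => if_pos rfl

/-- `G'` is obtained from `G` by a Δ-YY transformation. -/
def DeltaYYStep (G G' : MG) : Prop :=
  ∃ u v w : G.V, G.IsDelta u v w ∧ Iso (G.deltaYY u v w) G'

/-- `G'` is obtained from `G` by a YY-Δ transformation. -/
def YYDeltaStep (G G' : MG) : Prop :=
  ∃ x u v w : G.V, G.IsWye x u v w ∧ Iso (G.yyDelta x u v w) G'

/-- `G'` is obtained from `G` by a Δ-YY operation (either a Δ-YY transformation
or a YY-Δ transformation). -/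
def Step (G G' : MG) : Prop := DeltaYYStep G G' ∨ YYDeltaStep G G'

/-- Δ-YY equivalence: `G` can be transformed into `H`, up to isomorphism, by a
finite sequence of Δ-YY operations. -/
def DYYEquiv : MG → MG → Prop :=
  Relation.EqvGen (fun G G' => Step G G' ∨ Iso G G')

/-- The Δ-YY equivalence class of `G` contains only finitely many isomorphism
classes of multigraphs. -/
def FiniteClass (G : MG) : Prop :=
  ∃ S : Finset MG, ∀ H : MG, DYYEquiv G H → ∃ H' ∈ S, Iso H H'

/-- Connectivity: nonempty, and any two vertices are joined by a path. -/
def Connected (G : MG) : Prop :=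
  Nonempty G.V ∧ ∀ u v : G.V, Relation.ReflTransGen G.Adj u v

/-- The multigraph obtained by deleting a set of vertices (and all edges
incident to them). -/
def deleteVerts (G : MG) (S : Set G.V) : MG where
  V := {y : G.V // y ∉ S}
  fin := by haveI := G.fin; infer_instance
  mult a b := G.mult a.1 b.1
  symm := fun a b => G.symm a.1 b.1
  loopless := fun a => G.loopless a.1

/-- `G` is `k`-connected: it has more than `k` vertices and deleting any set of
fewer than `k` vertices leaves a connected multigraph. -/
def KConnected (G : MG) (k : ℕ) : Prop :=
  k < G.order ∧ ∀ S : Set G.V, S.ncard < k → (G.deleteVerts S).Connected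

/-- `G` is planar: it has a drawing in the plane in which vertices are distinct
points, every edge (each parallel edge separately) is a continuous injective
arc joining the points of its endpoints, no arc passes through a vertex point
in its interior, and the interiors of the arcs of distinct edges are disjoint.
The arc of the `k`-th edge from `v` to `u` is the reverse of the arc of the
`k`-th edge from `u` to `v` (they are the same edge drawn once). -/
def IsPlanar (G : MG) : Prop :=
  ∃ (pos : G.V → ℝ × ℝ) (γ : G.V → G.V → ℕ → C(unitInterval, ℝ × ℝ)),
    Function.Injective pos ∧
    (∀ u v k, k < G.mult u v →
      γ u v k 0 = pos u ∧ γ u v k 1 = pos v ∧ Function.Injective (γ u v k)) ∧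
    (∀ u v k (t : unitInterval), γ v u k t = γ u v k (unitInterval.symm t)) ∧
    (∀ u v k, k < G.mult u v → ∀ t : unitInterval, t ≠ 0 → t ≠ 1 →
      ∀ z : G.V, γ u v k t ≠ pos z) ∧
    (∀ u v k u' v' k', k < G.mult u v → k' < G.mult u' v' →
      (s(u, v) ≠ s(u', v') ∨ k ≠ k') →
      ∀ t t' : unitInterval, t ≠ 0 → t ≠ 1 → t' ≠ 0 → t' ≠ 1 →
        γ u v k t ≠ γ u' v' k' t')

/-- An independent set: no two of its vertices are adjacent. -/
def IsIndepSet (G : MG) (S : Set G.V) : Prop :=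
  ∀ u ∈ S, ∀ v ∈ S, ¬ G.Adj u v

/-- The independence number `α(G)`: the maximum size of an independent set. -/
def indepNum (G : MG) : ℕ :=
  sSup {n | ∃ S : Set G.V, G.IsIndepSet S ∧ S.ncard = n}

/-- The number of non-empty connections, i.e. the number of edges of the
simplification `G^S`. -/
def numConn (G : MG) : ℕ := {p : Sym2 G.V | G.multS p ≠ 0}.ncard

/-- The cyclomatic number `m - n + 1` of the simplification `G^S` of `G`. -/
def cyclomaticS (G : MG) : ℤ := (G.numConn : ℤ) - (G.order : ℤ) + 1

/-- `AddOnAt G a S` : the vertex set `S` of `G` carries (a subgraph copy of) an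
add-on whose addition vertex is `a`.  An add-on of length 0 is a double edge or
a delta; an add-on of length `n ≥ 1` is a 4-cycle `a b c d` with the
connections `ab`, `ad` of size 1 and `bc`, `cd` of size 2, glued at `c` to an
add-on of length `n - 1`. -/
inductive AddOnAt (G : MG) : G.V → Set G.V → Prop
  | double (a b : G.V) : a ≠ b → 2 ≤ G.mult a b → AddOnAt G a {a, b}
  | delta (a b c : G.V) : a ≠ b → a ≠ c → b ≠ c →
      1 ≤ G.mult a b → 1 ≤ G.mult a c → 1 ≤ G.mult b c → AddOnAt G a {a, b, c}
  | link (a b c d : G.V) (S : Set G.V) :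
      a ≠ b → a ≠ c → a ≠ d → b ≠ c → b ≠ d → c ≠ d →
      1 ≤ G.mult a b → 1 ≤ G.mult a d → 2 ≤ G.mult b c → 2 ≤ G.mult c d →
      AddOnAt G c S → S ∩ {a, b, d} = ∅ → AddOnAt G a ({a, b, d} ∪ S)

/-- `G` contains one of the four families of excluded subgraphs. -/
def HasExcluded (G : MG) : Prop :=
  -- (1) a 3-cycle in which at least one connection has size at least 2
  (∃ a b c : G.V, a ≠ b ∧ a ≠ c ∧ b ≠ c ∧
      2 ≤ G.mult a b ∧ 1 ≤ G.mult a c ∧ 1 ≤ G.mult b c) ∨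
  -- (2) a 4-cycle with at least three connections of size at least 2 and an
  -- add-on glued at a vertex incident to two of them
  (∃ a b c d : G.V, ∃ S : Set G.V,
      a ≠ b ∧ a ≠ c ∧ a ≠ d ∧ b ≠ c ∧ b ≠ d ∧ c ≠ d ∧
      2 ≤ G.mult a b ∧ 2 ≤ G.mult b c ∧ 2 ≤ G.mult c d ∧ 1 ≤ G.mult d a ∧
      AddOnAt G b S ∧ S ∩ {a, c, d} = ∅) ∨
  -- (3) a 5-cycle with all connections of size at least 2 and add-ons glued at
  -- two non-adjacent vertices of the cycle
  (∃ v₀ v₁ v₂ v₃ v₄ : G.V, ∃ S T : Set G.V,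
      v₀ ≠ v₁ ∧ v₀ ≠ v₂ ∧ v₀ ≠ v₃ ∧ v₀ ≠ v₄ ∧ v₁ ≠ v₂ ∧ v₁ ≠ v₃ ∧ v₁ ≠ v₄ ∧
      v₂ ≠ v₃ ∧ v₂ ≠ v₄ ∧ v₃ ≠ v₄ ∧
      2 ≤ G.mult v₀ v₁ ∧ 2 ≤ G.mult v₁ v₂ ∧ 2 ≤ G.mult v₂ v₃ ∧
      2 ≤ G.mult v₃ v₄ ∧ 2 ≤ G.mult v₄ v₀ ∧
      AddOnAt G v₀ S ∧ AddOnAt G v₂ T ∧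
      S ∩ {v₁, v₂, v₃, v₄} = ∅ ∧ T ∩ {v₀, v₁, v₃, v₄} = ∅ ∧ S ∩ T = ∅) ∨
  -- (4) a 4-cycle with three connections of size at least 2, whose fourth
  -- connection has size 1 and lies in a triangle, with add-ons glued at both
  -- vertices of that connection
  (∃ a b c d e : G.V, ∃ S T : Set G.V,
      a ≠ b ∧ a ≠ c ∧ a ≠ d ∧ a ≠ e ∧ b ≠ c ∧ b ≠ d ∧ b ≠ e ∧
      c ≠ d ∧ c ≠ e ∧ d ≠ e ∧
      2 ≤ G.mult a b ∧ 2 ≤ G.mult b c ∧ 2 ≤ G.mult c d ∧ G.mult d a = 1 ∧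
      1 ≤ G.mult d e ∧ 1 ≤ G.mult e a ∧
      AddOnAt G a S ∧ AddOnAt G d T ∧
      S ∩ {b, c, d, e} = ∅ ∧ T ∩ {a, b, c, e} = ∅ ∧ S ∩ T = ∅)

/-- The doubling of a simple graph: every edge is replaced by a connection of
size 2. -/
def doubling {V : Type} [Fintype V] (H : SimpleGraph V) : MG where
  V := V
  fin := inferInstance
  mult u v := if H.Adj u v then 2 else 0
  symm := by
    intro u v
    try dsimp only
    by_cases h : H.Adj u v
    · rw [if_pos h, if_pos h.symm]
    · rw [if_neg h, if_neg fun h' => h h'.symm]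
  loopless := fun v => if_neg (H.loopless.irrefl v)

end MG

end

section AuxStmt8

open MG

lemma MG.multS_mk' (G : MG) (a b : G.V) : G.multS s(a, b) = G.mult a b := rfl

lemma MG.order_card' (G : MG) (i : Fintype G.V) : G.order = @Fintype.card G.V i :=
  @Fintype.card_congr _ _ G.fin i (Equiv.refl _)

lemma MG.iso_cyclomaticS {G H : MG} (h : MG.Iso G H) : G.cyclomaticS = H.cyclomaticS := by
  obtain ⟨e, he⟩ := h
  haveI := G.fin; haveI := H.fin
  have horder : G.order = H.order := by
    rw [MG.order_card' G inferInstance, MG.order_card' H inferInstance]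
    exact Fintype.card_congr e
  have himg : {p : Sym2 H.V | H.multS p ≠ 0}
      = Sym2.map e '' {p : Sym2 G.V | G.multS p ≠ 0} := by
    ext q
    induction q using Sym2.ind with
    | _ c d =>
      simp only [Set.mem_setOf_eq, Set.mem_image]
      constructor
      · intro hq
        refine ⟨s(e.symm c, e.symm d), ?_, by simp⟩
        simpa [MG.multS_mk', ← he] using hq
      · rintro ⟨p, hp, hq⟩
        rw [← hq]
        induction p using Sym2.ind with
        | _ a b => simpa [MG.multS_mk', he] using hp
  have hconn : H.numConn = G.numConn := by
    rw [MG.numConn, MG.numConn, himg,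
      Set.ncard_image_of_injective _ (Sym2.map.injective e.injective)]
  rw [MG.cyclomaticS, MG.cyclomaticS, horder, hconn]

lemma MG.tri_eq_ite (G : MG) (u v w a b : G.V) :
    MG.triCount u v w a b =
      if s(a, b) ∈ ({s(u, v), s(u, w), s(v, w)} : Set (Sym2 G.V)) then 1 else 0 := rfl

lemma MG.numConn_deltaYY (G : MG) (u v w : G.V) (h : G.IsDelta u v w) :
    (G.deltaYY u v w).numConn = G.numConn +
      {p : Sym2 G.V |
        p ∈ ({s(u, v), s(u, w), s(v, w)} : Set (Sym2 G.V)) ∧ 2 ≤ G.multS p}.ncard := by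
  obtain ⟨huv, huw, hvw, hauv, hauw, havw⟩ := h
  haveI := G.fin
  set T : Set (Sym2 G.V) := {s(u, v), s(u, w), s(v, w)} with hTdef
  set E : Set (Sym2 G.V) := {p | G.multS p ≠ 0} with hEdef
  set D : Set (Sym2 G.V) := {p | p ∈ T ∧ 2 ≤ G.multS p} with hDdef
  set E2 : Set (Sym2 G.V) := (E \ T) ∪ D with hE2def
  set A : Set (Sym2 (Option G.V)) :=
    {s((none : Option G.V), some u), s(none, some v), s(none, some w)} with hAdef
  have hmem2 : ∀ a b : G.V, s(a, b) ∈ E2 ↔ G.mult a b - MG.triCount u v w a b ≠ 0 := by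
    intro a b
    have hms : G.multS s(a, b) = G.mult a b := rfl
    by_cases hT : s(a, b) ∈ T
    · have h1 : MG.triCount u v w a b = 1 := if_pos hT
      simp only [hE2def, hDdef, hEdef, Set.mem_union, Set.mem_diff, Set.mem_setOf_eq, hT,
        hms, h1, not_true, and_false, false_and, and_true, true_and, false_or, or_false]
      omega
    · have h0 : MG.triCount u v w a b = 0 := if_neg hT
      simp only [hE2def, hDdef, hEdef, Set.mem_union, Set.mem_diff, Set.mem_setOf_eq, hT,
        hms, h0, not_false_iff, and_false, false_and, and_true, true_and, false_or, or_false]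
      omega
  have key : {p : Sym2 (G.deltaYY u v w).V | (G.deltaYY u v w).multS p ≠ 0}
      = A ∪ Sym2.map some '' E2 := by
    ext q
    induction q using Sym2.ind with
    | _ α β =>
      simp only [Set.mem_setOf_eq, Set.mem_union, Set.mem_image]
      constructor
      · intro hq
        match α, β with
        | none, none => exact absurd rfl hq
        | none, some b =>
          left
          have hb : (if b = u ∨ b = v ∨ b = w then 2 else 0) ≠ 0 := hq
          have hb' : b = u ∨ b = v ∨ b = w := by
            by_contra hc; rw [if_neg hc] at hb; exact hb rfl
          rcases hb' with rfl | rfl | rfl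
          · exact Set.mem_insert _ _
          · exact Set.mem_insert_of_mem _ (Set.mem_insert _ _)
          · exact Set.mem_insert_of_mem _ (Set.mem_insert_of_mem _ rfl)
        | some a, none =>
          left
          have hb : (if a = u ∨ a = v ∨ a = w then 2 else 0) ≠ 0 := hq
          have hb' : a = u ∨ a = v ∨ a = w := by
            by_contra hc; rw [if_neg hc] at hb; exact hb rfl
          have hsw : s((none : Option G.V), some a) = s(some a, none) := Sym2.eq_swap
          rcases hb' with rfl | rfl | rfl
          · exact hsw ▸ Set.mem_insert _ _
          · exact hsw ▸ Set.mem_insert_of_mem _ (Set.mem_insert _ _)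
          · exact hsw ▸ Set.mem_insert_of_mem _ (Set.mem_insert_of_mem _ rfl)
        | some a, some b =>
          right
          exact ⟨s(a, b), (hmem2 a b).2 hq, rfl⟩
      · rintro (hA | ⟨p, hp, hq⟩)
        · rcases hA with h1 | h1 | h1 <;> rw [show s(α, β) = _ from h1]
          · show (if u = u ∨ u = v ∨ u = w then 2 else 0) ≠ 0
            rw [if_pos (Or.inl rfl)]; omega
          · show (if v = u ∨ v = v ∨ v = w then 2 else 0) ≠ 0
            rw [if_pos (Or.inr (Or.inl rfl))]; omega
          · show (if w = u ∨ w = v ∨ w = w then 2 else 0) ≠ 0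
            rw [if_pos (Or.inr (Or.inr rfl))]; omega
        · rw [← hq]
          induction p using Sym2.ind with
          | _ a b =>
            show G.mult a b - MG.triCount u v w a b ≠ 0
            exact (hmem2 a b).1 hp
  have hTE : T ⊆ E := by
    rintro p (h1 | h1 | h1) <;> rw [show p = _ from h1] <;>
      simp only [hEdef, Set.mem_setOf_eq, MG.multS_mk']
    · exact Nat.pos_iff_ne_zero.mp hauv
    · exact Nat.pos_iff_ne_zero.mp hauw
    · exact Nat.pos_iff_ne_zero.mp havw
  have hTcard : T.ncard = 3 := by
    have h1 : s(u, v) ≠ s(u, w) := by simp [Sym2.eq_iff, huv, huw, hvw]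
    have h2 : s(u, v) ≠ s(v, w) := by simp [Sym2.eq_iff, huv, huw, hvw]
    have h3 : s(u, w) ≠ s(v, w) := by simp [Sym2.eq_iff, huv, huw, hvw]
    rw [hTdef, Set.ncard_insert_of_notMem (by simp [h1, h2]) (Set.toFinite _),
      Set.ncard_pair h3]
  have hEsplit : (E \ T).ncard + 3 = E.ncard := by
    rw [← hTcard]; exact Set.ncard_diff_add_ncard_of_subset hTE (Set.toFinite _)
  have hE2card : E2.ncard = (E \ T).ncard + D.ncard := by
    rw [hE2def, Set.ncard_union_eq ?_ (Set.toFinite _) (Set.toFinite _)]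
    rw [Set.disjoint_left]
    rintro p ⟨-, hpT⟩ ⟨hpT', -⟩
    exact hpT hpT'
  have hAcard : A.ncard = 3 := by
    have h1 : s((none : Option G.V), some u) ≠ s(none, some v) := by
      simp [Sym2.eq_iff, huv, huw, hvw]
    have h2 : s((none : Option G.V), some u) ≠ s(none, some w) := by
      simp [Sym2.eq_iff, huv, huw, hvw]
    have h3 : s((none : Option G.V), some v) ≠ s(none, some w) := by
      simp [Sym2.eq_iff, huv, huw, hvw]
    rw [hAdef, Set.ncard_insert_of_notMem (by simp [h1, h2]) (Set.toFinite _),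
      Set.ncard_pair h3]
  have hdisj : Disjoint A (Sym2.map some '' E2) := by
    rw [Set.disjoint_left]
    rintro q hqA ⟨p, -, hq⟩
    have hnone : (none : Option G.V) ∈ q := by
      rcases hqA with h1 | h1 | h1 <;> rw [show q = _ from h1] <;>
        exact Sym2.mem_mk_left _ _
    rw [← hq] at hnone
    induction p using Sym2.ind with
    | _ a b =>
      rw [Sym2.map_pair_eq, Sym2.mem_iff] at hnone
      rcases hnone with h1 | h1 <;> exact Option.some_ne_none _ h1.symm
  have : (G.deltaYY u v w).numConn = A.ncard + E2.ncard := by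
    rw [MG.numConn, key]
    show (A ∪ Sym2.map some '' E2).ncard = _
    rw [Set.ncard_union_eq hdisj (Set.toFinite _) (Set.toFinite _),
      Set.ncard_image_of_injective _ (Sym2.map.injective (Option.some_injective _))]
  rw [this, hAcard, hE2card]
  have : G.numConn = E.ncard := rfl
  omega

lemma MG.order_deltaYY (G : MG) (u v w : G.V) :
    (G.deltaYY u v w).order = G.order + 1 := by
  haveI := G.fin
  rw [MG.order_card' (G.deltaYY u v w) (instFintypeOption : Fintype (Option G.V)),
    MG.order_card' G inferInstance]
  exact Fintype.card_option

lemma MG.numConn_yyDelta (G : MG) (x u v w : G.V) (h : G.IsWye x u v w) :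
    (G.yyDelta x u v w).numConn +
      {p : Sym2 G.V |
        p ∈ ({s(u, v), s(u, w), s(v, w)} : Set (Sym2 G.V)) ∧ 1 ≤ G.multS p}.ncard
      = G.numConn := by
  obtain ⟨huv, huw, hvw, hxu, hxv, hxw, hmu, hmv, hmw, hzero⟩ := h
  haveI := G.fin
  set T : Set (Sym2 G.V) := {s(u, v), s(u, w), s(v, w)} with hTdef
  set E : Set (Sym2 G.V) := {p | G.multS p ≠ 0} with hEdef
  set Enox : Set (Sym2 G.V) := {p | G.multS p ≠ 0 ∧ x ∉ p} with hExdef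
  set X3 : Set (Sym2 G.V) := {s(x, u), s(x, v), s(x, w)} with hX3def
  have hTnox : ∀ p ∈ T, x ∉ p := by
    rintro p (h1 | h1 | h1) <;> rw [show p = _ from h1] <;> rw [Sym2.mem_iff] <;>
      rintro (rfl | rfl) <;> simp_all
  -- the edge set of G splits off the three wye edges
  have hEeq : E = Enox ∪ X3 := by
    ext p
    induction p using Sym2.ind with
    | _ a b =>
      simp only [hEdef, hExdef, Set.mem_setOf_eq, Set.mem_union]
      constructor
      · intro hp
        by_cases hxp : x ∈ s(a, b)
        · right
          rw [Sym2.mem_iff] at hxp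
          have hmem : ∀ c : G.V, G.mult x c ≠ 0 → s(x, c) ∈ X3 := by
            intro c hc
            by_cases hcu : c = u
            · subst hcu; exact Set.mem_insert _ _
            by_cases hcv : c = v
            · subst hcv; exact Set.mem_insert_of_mem _ (Set.mem_insert _ _)
            by_cases hcw : c = w
            · subst hcw; exact Set.mem_insert_of_mem _ (Set.mem_insert_of_mem _ rfl)
            exact absurd (hzero c hcu hcv hcw) hc
          rcases hxp with rfl | rfl
          · exact hmem b hp
          · have hsw : s(x, a) = s(a, x) := Sym2.eq_swap
            exact hsw ▸ hmem a (by rw [G.symm]; exact hp)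
        · exact Or.inl ⟨hp, hxp⟩
      · rintro (⟨hp, -⟩ | hp)
        · exact hp
        · rcases hp with h1 | h1 | h1 <;> rw [show s(a, b) = _ from h1]
          · show G.mult x u ≠ 0; omega
          · show G.mult x v ≠ 0; omega
          · show G.mult x w ≠ 0; omega
  have hX3card : X3.ncard = 3 := by
    have h1 : s(x, u) ≠ s(x, v) := by simp [Sym2.eq_iff, huv, hxu, hxv]
    have h2 : s(x, u) ≠ s(x, w) := by simp [Sym2.eq_iff, huw, hxu, hxw]
    have h3 : s(x, v) ≠ s(x, w) := by simp [Sym2.eq_iff, hvw, hxv, hxw]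
    rw [hX3def, Set.ncard_insert_of_notMem (by simp [h1, h2]) (Set.toFinite _),
      Set.ncard_pair h3]
  have hdisjx : Disjoint Enox X3 := by
    rw [Set.disjoint_left]
    rintro p ⟨-, hxp⟩ (h1 | h1 | h1) <;> rw [show p = _ from h1] at hxp <;>
      exact hxp (Sym2.mem_mk_left _ _)
  have hEcard : Enox.ncard + 3 = E.ncard := by
    rw [hEeq, Set.ncard_union_eq hdisjx (Set.toFinite _) (Set.toFinite _), hX3card]
  -- the edge set of the transformed graph
  have hdiag : ∀ c : G.V, s(c, c) ∉ T := by
    rintro c (h1 | h1 | h1)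
    · rw [Sym2.eq_iff] at h1; rcases h1 with ⟨rfl, rfl⟩ | ⟨rfl, rfl⟩ <;> simp_all
    · rw [Sym2.eq_iff] at h1; rcases h1 with ⟨rfl, rfl⟩ | ⟨rfl, rfl⟩ <;> simp_all
    · have h2 : s(c, c) = s(v, w) := h1
      rw [Sym2.eq_iff] at h2; rcases h2 with ⟨rfl, rfl⟩ | ⟨rfl, rfl⟩ <;> simp_all
  have hne : ∀ a b : (G.yyDelta x u v w).V, a ≠ b →
      (G.yyDelta x u v w).mult a b = G.mult a.1 b.1 + MG.triCount u v w a.1 b.1 :=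
    fun a b hab => if_neg hab
  have key : {p : Sym2 (G.yyDelta x u v w).V | (G.yyDelta x u v w).multS p ≠ 0}
      = Sym2.map Subtype.val ⁻¹' (Enox ∪ T) := by
    ext q
    induction q using Sym2.ind with
    | _ a b =>
      simp only [Set.mem_setOf_eq, Set.mem_preimage, Sym2.map_pair_eq, Set.mem_union]
      constructor
      · intro hq
        rw [MG.multS_mk'] at hq
        have hab : a ≠ b := by
          rintro rfl; exact hq ((G.yyDelta x u v w).loopless a)
        rw [hne a b hab] at hq
        by_cases hT : s(a.1, b.1) ∈ T
        · exact Or.inr hT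
        · left
          have h0 : MG.triCount u v w a.1 b.1 = 0 := if_neg hT
          refine ⟨by show G.mult a.1 b.1 ≠ 0; omega, ?_⟩
          show x ∉ s(a.1, b.1); rw [Sym2.mem_iff]
          rintro (h1 | h1)
          · exact a.2 h1.symm
          · exact b.2 h1.symm
      · intro hp
        rw [MG.multS_mk']
        have hab : a ≠ b := by
          rintro rfl
          rcases hp with ⟨hm, -⟩ | hT
          · change G.mult a.1 a.1 ≠ 0 at hm; rw [G.loopless] at hm; exact hm rfl
          · exact hdiag a.1 hT
        rw [hne a b hab]
        rcases hp with ⟨hm, -⟩ | hT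
        · change G.mult a.1 b.1 ≠ 0 at hm; omega
        · have h1 : MG.triCount u v w a.1 b.1 = 1 := if_pos hT
          omega
  have hinj : Function.Injective (Sym2.map (Subtype.val : {y : G.V // y ≠ x} → G.V)) :=
    Sym2.map.injective Subtype.val_injective
  -- every element of Enox ∪ T avoids x, so the preimage has the same cardinality
  have hsub : Enox ∪ T ⊆ Set.range (Sym2.map (Subtype.val : {y : G.V // y ≠ x} → G.V)) := by
    intro p hp
    have hxp : x ∉ p := by
      rcases hp with ⟨-, hxp⟩ | hT
      · exact hxp
      · exact hTnox p hT
    induction p using Sym2.ind with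
    | _ a b =>
      rw [Sym2.mem_iff] at hxp
      push_neg at hxp
      exact ⟨s(⟨a, fun hc => hxp.1 hc.symm⟩, ⟨b, fun hc => hxp.2 hc.symm⟩), rfl⟩
  have hprecard : (Sym2.map (Subtype.val : {y : G.V // y ≠ x} → G.V) ⁻¹' (Enox ∪ T)).ncard
      = (Enox ∪ T).ncard := by
    rw [← Set.ncard_image_of_injective _ hinj, Set.image_preimage_eq_of_subset hsub]
  -- cardinality of Enox ∪ T
  have hsplitT : (T ∩ Enox).ncard + (T \ Enox).ncard = 3 := by
    have h1 : s(u, v) ≠ s(u, w) := by simp [Sym2.eq_iff, huv, huw, hvw]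
    have h2 : s(u, v) ≠ s(v, w) := by simp [Sym2.eq_iff, huv, huw, hvw]
    have h3 : s(u, w) ≠ s(v, w) := by simp [Sym2.eq_iff, huv, huw, hvw]
    have hT3 : T.ncard = 3 := by
      rw [hTdef, Set.ncard_insert_of_notMem (by simp [h1, h2]) (Set.toFinite _),
        Set.ncard_pair h3]
    rw [← hT3]
    rw [Set.ncard_inter_add_ncard_diff_eq_ncard T Enox (Set.toFinite _)]
  have hunion : (Enox ∪ T).ncard = Enox.ncard + (T \ Enox).ncard := by
    rw [Set.union_comm, ← Set.diff_union_self,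
      Set.ncard_union_eq Set.disjoint_sdiff_left (Set.toFinite _) (Set.toFinite _)]
    omega
  have hiset : {p : Sym2 G.V |
      p ∈ ({s(u, v), s(u, w), s(v, w)} : Set (Sym2 G.V)) ∧ 1 ≤ G.multS p} = T ∩ Enox := by
    ext p
    simp only [Set.mem_setOf_eq, Set.mem_inter_iff, hExdef]
    constructor
    · rintro ⟨hT, hm⟩
      exact ⟨hT, by omega, hTnox p hT⟩
    · rintro ⟨hT, hm, -⟩
      exact ⟨hT, by omega⟩
  have hnc : (G.yyDelta x u v w).numConn = Enox.ncard + (T \ Enox).ncard := by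
    rw [MG.numConn, key]; exact hprecard.trans hunion
  have hncG : G.numConn = E.ncard := rfl
  rw [hnc, hiset]
  omega

lemma MG.order_yyDelta (G : MG) (x u v w : G.V) :
    (G.yyDelta x u v w).order + 1 = G.order := by
  haveI := G.fin
  have h1 : (G.yyDelta x u v w).order = Fintype.card {y : G.V // y ≠ x} := by
    rw [MG.order_card' (G.yyDelta x u v w) ((G.yyDelta x u v w).fin)]
    exact @Fintype.card_congr _ _ ((G.yyDelta x u v w).fin) inferInstance
      (Equiv.refl {y : G.V // y ≠ x})
  rw [h1, MG.order_card' G inferInstance]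
  have h2 : Fintype.card {y : G.V // y ≠ x}
      = Fintype.card G.V - Fintype.card {y : G.V // y = x} :=
    Fintype.card_subtype_compl (· = x)
  rw [h2, Fintype.card_subtype_eq x]
  have : 0 < Fintype.card G.V := Fintype.card_pos_iff.2 ⟨x⟩
  omega

end AuxStmt8

/-- For a connected multigraph `G`, if `G'` is obtained by a Δ-YY
transformation on a delta `u, v, w`, then the cyclomatic number `c'` of the
simplification `G'^S` satisfies `c' = c - (1 - i)`, where `c` is the cyclomatic
number of `G^S` and `i` is the number of non-empty connections among the pairs
`uv, uw, vw` after the deletion of the edges of the delta (i.e. the number of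
those pairs whose connection in `G` has size at least 2); and if `G'` is
obtained by a YY-Δ transformation on a wye with centre `x` and external
vertices `u, v, w`, then `c' = c + (1 - i)`, where now `i` is the number of
non-empty connections among `uv, uw, vw` after the deletion of the edges of the
wye (the wye edges are all incident to `x`, so `i` is the number of those pairs
whose connection in `G` is non-empty). -/
theorem stmt_8 :
    (∀ G G' : MG, G.Connected → ∀ u v w : G.V, G.IsDelta u v w →
      MG.Iso (G.deltaYY u v w) G' →
      G'.cyclomaticS = G.cyclomaticS -
        (1 - ({p : Sym2 G.V |
            p ∈ ({s(u, v), s(u, w), s(v, w)} : Set (Sym2 G.V)) ∧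
              2 ≤ G.multS p}.ncard : ℤ))) ∧
    (∀ G G' : MG, G.Connected → ∀ x u v w : G.V, G.IsWye x u v w →
      MG.Iso (G.yyDelta x u v w) G' →
      G'.cyclomaticS = G.cyclomaticS +
        (1 - ({p : Sym2 G.V |
            p ∈ ({s(u, v), s(u, w), s(v, w)} : Set (Sym2 G.V)) ∧
              1 ≤ G.multS p}.ncard : ℤ))) := by
  constructor
  · intro G G' _hconn u v w hd hiso
    rw [← MG.iso_cyclomaticS hiso]
    have hc := MG.numConn_deltaYY G u v w hd
    have ho := MG.order_deltaYY G u v w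
    rw [MG.cyclomaticS, MG.cyclomaticS]
    omega
  · intro G G' _hconn x u v w hw hiso
    rw [← MG.iso_cyclomaticS hiso]
    have hc := MG.numConn_yyDelta G x u v w hw
    have ho := MG.order_yyDelta G x u v w
    rw [MG.cyclomaticS, MG.cyclomaticS]
    omega
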